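/- arXiv:1903.01447 — 2 statements merged into one kernel-verified Lean document; each statement's English description precedes it below -/
import Mathlib

section
/- Let c > 0, E_0 > 0, s_r > 0, k > 0, β > 0, and let q_f : [0,∞) → ℝ be continuous with 0 ≤ q_f(t) ≤ q̄_f and q̄_f < c k s_r / β. Define E(t) = e^{-ct} ( E_0 + (k s_r/β)(e^{ct} − 1) − ∫_0^t e^{cτ} q_f(τ) dτ ). Then E(t) > 0 for all t ≥ 0, and E satisfies E'(t) = q_c(t) − q_f(t) where q_c(t) = c(k s_r/β − E(t)). -/
open Real intervalIntegral

theorem stmt_3 (c E0 sr k β qbar : ℝ) (hc : 0 < c) (hE0 : 0 < E0) (hsr : 0 < sr)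
    (hk : 0 < k) (hβ : 0 < β)
    (qf : ℝ → ℝ) (hqf_cont : Continuous qf)
    (hqf : ∀ t, 0 ≤ t → 0 ≤ qf t ∧ qf t ≤ qbar)
    (hgain : qbar < c * k * sr / β)
    (E qc : ℝ → ℝ)
    (hE : E = fun t => Real.exp (-c * t) *
      (E0 + (k * sr / β) * (Real.exp (c * t) - 1) -
        ∫ τ in (0:ℝ)..t, Real.exp (c * τ) * qf τ))
    (hqc : qc = fun t => c * (k * sr / β - E t)) :
    ∀ t, 0 ≤ t → 0 < E t ∧ HasDerivAt E (qc t - qf t) t := by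
  intro t ht
  set A : ℝ := k * sr / β with hA
  have hf : Continuous (fun τ : ℝ => Real.exp (c * τ) * qf τ) :=
    ((Real.continuous_exp.comp (continuous_const.mul continuous_id)).mul hqf_cont)
  -- bound for the integral
  have hint : (∫ τ in (0:ℝ)..t, Real.exp (c * τ) * qf τ) ≤
      qbar / c * (Real.exp (c * t) - 1) := by
    have hmono : (∫ τ in (0:ℝ)..t, Real.exp (c * τ) * qf τ) ≤
        ∫ τ in (0:ℝ)..t, Real.exp (c * τ) * qbar := by
      have hg : Continuous (fun τ : ℝ => Real.exp (c * τ) * qbar) := by continuity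
      apply intervalIntegral.integral_mono_on ht (hf.intervalIntegrable 0 t)
        (hg.intervalIntegrable 0 t)
      intro x hx
      have := (hqf x hx.1).2
      have hexp : 0 < Real.exp (c * x) := Real.exp_pos _
      nlinarith
    have hcomp : (∫ τ in (0:ℝ)..t, Real.exp (c * τ)) = (Real.exp (c * t) - 1) / c := by
      have h := intervalIntegral.integral_comp_mul_left (a := (0:ℝ)) (b := t)
        (fun x => Real.exp x) (ne_of_gt hc)
      simp only [mul_zero, integral_exp, Real.exp_zero, smul_eq_mul] at h
      rw [h]
      field_simp
    calc (∫ τ in (0:ℝ)..t, Real.exp (c * τ) * qf τ) ≤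
        ∫ τ in (0:ℝ)..t, Real.exp (c * τ) * qbar := hmono
      _ = (∫ τ in (0:ℝ)..t, Real.exp (c * τ)) * qbar := by
          rw [intervalIntegral.integral_mul_const]
      _ = qbar / c * (Real.exp (c * t) - 1) := by rw [hcomp]; ring
  have hexp1 : 1 ≤ Real.exp (c * t) := Real.one_le_exp (by positivity)
  have hqA : qbar / c < A := by
    rw [hA]
    rw [div_lt_iff₀ hc]
    calc qbar < c * k * sr / β := hgain
      _ = k * sr / β * c := by ring
  have hpos : 0 < E t := by
    rw [hE]
    simp only
    apply mul_pos (Real.exp_pos _)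
    have : qbar / c * (Real.exp (c * t) - 1) ≤ A * (Real.exp (c * t) - 1) :=
      mul_le_mul_of_nonneg_right (le_of_lt hqA) (by linarith)
    linarith
  refine ⟨hpos, ?_⟩
  -- derivative
  have hG : HasDerivAt (fun u => ∫ τ in (0:ℝ)..u, Real.exp (c * τ) * qf τ)
      (Real.exp (c * t) * qf t) t :=
    (hf.integral_hasStrictDerivAt 0 t).hasDerivAt
  have hexpD : HasDerivAt (fun u : ℝ => Real.exp (c * u)) (Real.exp (c * t) * c) t := by
    simpa using ((hasDerivAt_id t).const_mul c).exp
  have hexpN : HasDerivAt (fun u : ℝ => Real.exp (-c * u)) (Real.exp (-c * t) * (-c)) t := by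
    simpa using ((hasDerivAt_id t).const_mul (-c)).exp
  have hF : HasDerivAt (fun u => E0 + A * (Real.exp (c * u) - 1) -
      ∫ τ in (0:ℝ)..u, Real.exp (c * τ) * qf τ)
      (A * (Real.exp (c * t) * c) - Real.exp (c * t) * qf t) t := by
    have := ((hasDerivAt_const t E0).add ((hexpD.sub_const 1).const_mul A)).sub hG
    simp only [zero_add] at this
    exact this
  have hprod := hexpN.mul hF
  rw [hE, hqc]
  simp only
  refine hprod.congr_deriv ?_
  symm
  have hee : Real.exp (-c * t) * Real.exp (c * t) = 1 := by
    rw [← Real.exp_add]; simp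
  rw [hE]
  simp only
  linear_combination (qf t - c * A) * hee
end

section
/- Let a, b > 0, Γ ≥ 0, let V : [0,∞) → [0,∞) be C¹, z : [0,∞) → ℝ be C¹ with 0 < z(t) ≤ z̄ for all t, and d continuous, such that V'(t) ≤ −b V(t) + Γ d(t)² + a z'(t) V(t). Then V(t) ≤ V(0) e^{a z̄} e^{−(b/2)t} + (2Γ/b) e^{a z̄} sup_{τ∈[0,t]} d(τ)². -/
open Real Set

theorem stmt_5 (a b Γ zbar : ℝ) (ha : 0 < a) (hb : 0 < b) (hΓ : 0 ≤ Γ)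
    (V V' z z' d : ℝ → ℝ)
    (hV_nn : ∀ t, 0 ≤ t → 0 ≤ V t)
    (hV_deriv : ∀ t, 0 ≤ t → HasDerivAt V (V' t) t)
    (hV'_cont : Continuous V')
    (hz_deriv : ∀ t, 0 ≤ t → HasDerivAt z (z' t) t)
    (hz'_cont : Continuous z')
    (hz_bnd : ∀ t, 0 ≤ t → 0 < z t ∧ z t ≤ zbar)
    (hd_cont : Continuous d)
    (hineq : ∀ t, 0 ≤ t → V' t ≤ -b * V t + Γ * (d t) ^ 2 + a * z' t * V t) :
    ∀ t, 0 ≤ t →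
      V t ≤ V 0 * Real.exp (a * zbar) * Real.exp (-(b / 2) * t) +
        (2 * Γ / b) * Real.exp (a * zbar) * sSup ((fun τ => (d τ) ^ 2) '' Icc 0 t) := by
  intro T hT
  set M := sSup ((fun τ => (d τ) ^ 2) '' Icc 0 T) with hMdef
  have hbdd : BddAbove ((fun τ => (d τ) ^ 2) '' Icc 0 T) :=
    (isCompact_Icc.image (by continuity)).bddAbove
  have hdM : ∀ s ∈ Icc (0:ℝ) T, (d s) ^ 2 ≤ M := fun s hs => le_csSup hbdd ⟨s, hs, rfl⟩
  have hM0 : 0 ≤ M := le_trans (sq_nonneg (d 0)) (hdM 0 (left_mem_Icc.2 hT))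
  set c := Γ * M / b with hcdef
  have hc0 : 0 ≤ c := by positivity
  set F := fun s => V s * Real.exp (-a * z s) * Real.exp (b * s) -
      c * (Real.exp (b * s) - 1) with hFdef
  have hF : ∀ s, 0 ≤ s → HasDerivAt F
      ((V' s * Real.exp (-a * z s) + V s * (Real.exp (-a * z s) * (-a * z' s))) *
          Real.exp (b * s)
        + V s * Real.exp (-a * z s) * (Real.exp (b * s) * b)
        - c * (Real.exp (b * s) * b)) s := by
    intro s hs
    have hVs := hV_deriv s hs
    have hzs := hz_deriv s hs
    have h1 : HasDerivAt (fun s => -a * z s) (-a * z' s) s := hzs.const_mul (-a)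
    have h2 : HasDerivAt (fun s => Real.exp (-a * z s))
        (Real.exp (-a * z s) * (-a * z' s)) s := h1.exp
    have h3 : HasDerivAt (fun s => Real.exp (b * s)) (Real.exp (b * s) * b) s := by
      simpa using ((hasDerivAt_id s).const_mul b).exp
    exact ((hVs.mul h2).mul h3).sub ((h3.sub_const 1).const_mul c)
  have hFc : ContinuousOn F (Icc 0 T) :=
    fun s hs => ((hF s hs.1).continuousAt).continuousWithinAt
  have hFd : DifferentiableOn ℝ F (interior (Icc (0:ℝ) T)) := by
    rw [interior_Icc]
    exact fun x hx => ((hF x hx.1.le).differentiableAt).differentiableWithinAt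
  have hFnp : ∀ x ∈ interior (Icc (0:ℝ) T), deriv F x ≤ 0 := by
    intro x hx
    rw [interior_Icc] at hx
    have hx0 : (0:ℝ) ≤ x := hx.1.le
    have hxI : x ∈ Icc (0:ℝ) T := ⟨hx0, hx.2.le⟩
    rw [(hF x hx0).deriv]
    set E := Real.exp (-a * z x) with hE
    set P := Real.exp (b * x) with hP
    have hEpos : 0 < E := Real.exp_pos _
    have hPpos : 0 < P := Real.exp_pos _
    have hE1 : E ≤ 1 := by
      rw [hE, Real.exp_le_one_iff]
      nlinarith [(hz_bnd x hx0).1]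
    have hK : V' x + -a * z' x * V x + b * V x ≤ Γ * (d x) ^ 2 := by
      have := hineq x hx0; linarith
    have hcb : c * b = Γ * M := by rw [hcdef]; field_simp
    have step1 : (V' x + -a * z' x * V x + b * V x) * E ≤ Γ * (d x) ^ 2 := by
      calc (V' x + -a * z' x * V x + b * V x) * E ≤ Γ * (d x) ^ 2 * E :=
            mul_le_mul_of_nonneg_right hK hEpos.le
        _ ≤ Γ * (d x) ^ 2 := mul_le_of_le_one_right (by positivity) hE1
    have step2 : Γ * (d x) ^ 2 ≤ Γ * M := mul_le_mul_of_nonneg_left (hdM x hxI) hΓ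
    have step3 : (V' x + -a * z' x * V x + b * V x) * E * P ≤ Γ * M * P :=
      mul_le_mul_of_nonneg_right (step1.trans step2) hPpos.le
    nlinarith [step3, hcb]
  have hanti : AntitoneOn F (Icc 0 T) :=
    antitoneOn_of_deriv_nonpos (convex_Icc 0 T) hFc hFd hFnp
  have hFT : F T ≤ F 0 := hanti (left_mem_Icc.2 hT) (right_mem_Icc.2 hT) hT
  set P := Real.exp (b * T) with hP
  have hPpos : 0 < P := Real.exp_pos _
  have hF0 : F 0 = V 0 * Real.exp (-a * z 0) := by simp [hFdef]
  have hFT' : V T * Real.exp (-a * z T) * P ≤ V 0 * Real.exp (-a * z 0) + c * (P - 1) := by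
    have : V T * Real.exp (-a * z T) * P - c * (P - 1) ≤ V 0 * Real.exp (-a * z 0) := by
      rw [← hF0]; exact hFT
    linarith
  have hez0 : Real.exp (-a * z 0) ≤ 1 := by
    rw [Real.exp_le_one_iff]
    nlinarith [(hz_bnd 0 le_rfl).1]
  have hV0 : 0 ≤ V 0 := hV_nn 0 le_rfl
  have hmulP : Real.exp (-(b * T)) * P = 1 := by
    rw [hP, ← Real.exp_add]; simp
  have key : V T * Real.exp (-a * z T) ≤ V 0 * Real.exp (-(b * T)) + c := by
    have h5 : (V 0 * Real.exp (-(b * T)) + c) * P = V 0 + c * P := by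
      have := hmulP; nlinarith [this]
    have h6 : V T * Real.exp (-a * z T) * P ≤ (V 0 * Real.exp (-(b * T)) + c) * P := by
      rw [h5]
      have : V 0 * Real.exp (-a * z 0) ≤ V 0 :=
        mul_le_of_le_one_right hV0 hez0
      nlinarith [hFT', hc0]
    exact le_of_mul_le_mul_right h6 hPpos
  have hVT_eq : V T = V T * Real.exp (-a * z T) * Real.exp (a * z T) := by
    rw [mul_assoc, ← Real.exp_add]; simp
  have hzeT : Real.exp (a * z T) ≤ Real.exp (a * zbar) :=
    Real.exp_le_exp.2 (mul_le_mul_of_nonneg_left (hz_bnd T hT).2 ha.le)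
  have hVT : V T ≤ (V 0 * Real.exp (-(b * T)) + c) * Real.exp (a * zbar) := by
    rw [hVT_eq]
    exact mul_le_mul key hzeT (Real.exp_pos _).le (by positivity)
  have h6 : V 0 * Real.exp (-(b * T)) ≤ V 0 * Real.exp (-(b / 2) * T) :=
    mul_le_mul_of_nonneg_left (Real.exp_le_exp.2 (by nlinarith)) hV0
  have hΓM : 0 ≤ Γ * M := mul_nonneg hΓ hM0
  have h7 : c ≤ 2 * Γ / b * M := by
    rw [hcdef, show 2 * Γ / b * M = 2 * (Γ * M) / b by ring]
    exact (div_le_div_iff_of_pos_right hb).2 (by linarith)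
  have hexpz : (0:ℝ) ≤ Real.exp (a * zbar) := (Real.exp_pos _).le
  calc V T ≤ (V 0 * Real.exp (-(b * T)) + c) * Real.exp (a * zbar) := hVT
    _ ≤ (V 0 * Real.exp (-(b / 2) * T) + 2 * Γ / b * M) * Real.exp (a * zbar) :=
        mul_le_mul_of_nonneg_right (by linarith) hexpz
    _ = V 0 * Real.exp (a * zbar) * Real.exp (-(b / 2) * T) +
        2 * Γ / b * Real.exp (a * zbar) * M := by ring
end
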